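/- arXiv:2601.18117 — 2 statements merged into one kernel-verified Lean document; each statement's English description precedes it below -/
import Mathlib

section
/- Let B be symmetric with b_ii < 0, diagonally dominant with parameter μ ∈ [0,1), and a ∈ ℝ^N nonzero. Let p* = -(1/2)B⁻¹a and p^{NE} = -(A^{NE})⁻¹a, with R(p) = aᵀp + pᵀBp. Then R(p^{NE})/R(p*) ≥ 4(1-μ)/(2-μ)². -/
open Matrix Finset

lemma dot_sym_mulVec {n : Type*} [Fintype n] {G : Matrix n n ℝ} (hG : Gᵀ = G)
    (y z : n → ℝ) : (G *ᵥ y) ⬝ᵥ z = y ⬝ᵥ (G *ᵥ z) := by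
  rw [Matrix.dotProduct_mulVec, ← Matrix.mulVec_transpose, hG]

lemma dot_self_nonneg {n : Type*} [Fintype n] (y : n → ℝ) : 0 ≤ y ⬝ᵥ y :=
  Finset.sum_nonneg fun i _ => mul_self_nonneg _

lemma dot_self_pos {n : Type*} [Fintype n] {y : n → ℝ} (hy : y ≠ 0) : 0 < y ⬝ᵥ y := by
  obtain ⟨i, hi⟩ := Function.ne_iff.mp hy
  have hi' : (0 : ℝ) < y i * y i := mul_self_pos.mpr hi
  exact Finset.sum_pos' (fun j _ => mul_self_nonneg _) ⟨i, Finset.mem_univ i, hi'⟩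

open scoped MatrixOrder in
lemma key_ineq {n : Type*} [Fintype n] [DecidableEq n] {M : Matrix n n ℝ}
    (hM : M.PosDef) {m L : ℝ} (hmL : m * L = 1)
    (hlow : ∀ y, m * (y ⬝ᵥ y) ≤ y ⬝ᵥ (M *ᵥ y))
    (hupp : ∀ y, y ⬝ᵥ (M *ᵥ y) ≤ L * (y ⬝ᵥ y)) (y : n → ℝ) :
    y ⬝ᵥ (M *ᵥ y) + y ⬝ᵥ (M⁻¹ *ᵥ y) ≤ (m + L) * (y ⬝ᵥ y) := by
  have hMh : M.IsHermitian := hM.isHermitian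
  have hMt : Mᵀ = M := by
    ext i j
    have := congrFun (congrFun hMh.eq i) j
    simpa [Matrix.conjTranspose_apply] using this
  -- P := M - m • 1
  set P : Matrix n n ℝ := M - m • (1 : Matrix n n ℝ) with hPdef
  have hPmv : ∀ x, P *ᵥ x = M *ᵥ x - m • x := by
    intro x; simp [hPdef, Matrix.sub_mulVec, Matrix.smul_mulVec]
  have hPt : Pᵀ = P := by
    simp [hPdef, Matrix.transpose_sub, hMt, Matrix.transpose_smul]
  have hPq : ∀ x, x ⬝ᵥ (P *ᵥ x) = x ⬝ᵥ (M *ᵥ x) - m * (x ⬝ᵥ x) := by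
    intro x
    rw [hPmv]
    simp [dotProduct_sub, dotProduct_smul, smul_eq_mul]
  have hPps : P.PosSemidef := by
    refine Matrix.PosSemidef.of_dotProduct_mulVec_nonneg ?_ ?_
    · ext i j
      have := congrFun (congrFun hPt i) j
      simpa [Matrix.conjTranspose_apply, Matrix.transpose_apply] using this
    · intro x
      have := hlow x
      rw [show (star x : n → ℝ) = x from star_trivial x, hPq]
      linarith
  set Rt := CFC.sqrt P with hRtdef
  have hRR : Rt * Rt = P := CFC.sqrt_mul_sqrt_self P (Matrix.nonneg_iff_posSemidef.mpr hPps)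
  have hRh : Rt.IsHermitian := (Matrix.nonneg_iff_posSemidef.mp (CFC.sqrt_nonneg P)).1
  have hRt : Rtᵀ = Rt := by
    ext i j
    have := congrFun (congrFun hRh.eq i) j
    simpa [Matrix.conjTranspose_apply] using this
  have hsq : ∀ z, (Rt *ᵥ z) ⬝ᵥ (Rt *ᵥ z) = z ⬝ᵥ (P *ᵥ z) := by
    intro z
    rw [dot_sym_mulVec hRt, Matrix.mulVec_mulVec, hRR]
  -- key pointwise bound on P²
  have hP2 : ∀ z, z ⬝ᵥ (P *ᵥ (P *ᵥ z)) ≤ (L - m) * (z ⬝ᵥ (P *ᵥ z)) := by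
    intro z
    have h1 : z ⬝ᵥ (P *ᵥ (P *ᵥ z)) = (P *ᵥ z) ⬝ᵥ (P *ᵥ z) := by
      rw [dot_sym_mulVec hPt]
    have h2 : P *ᵥ z = Rt *ᵥ (Rt *ᵥ z) := by rw [Matrix.mulVec_mulVec, hRR]
    have h3 : (P *ᵥ z) ⬝ᵥ (P *ᵥ z) = (Rt *ᵥ z) ⬝ᵥ (P *ᵥ (Rt *ᵥ z)) := by
      rw [h2, hsq]
    have h4 : (Rt *ᵥ z) ⬝ᵥ (P *ᵥ (Rt *ᵥ z)) ≤ (L - m) * ((Rt *ᵥ z) ⬝ᵥ (Rt *ᵥ z)) := by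
      rw [hPq]
      have := hupp (Rt *ᵥ z)
      linarith
    rw [h1, h3, hsq] at *
    linarith [h4]
  -- scalar consequence
  have hs2 : ∀ z, z ⬝ᵥ (M *ᵥ (M *ᵥ z)) ≤ (m + L) * (z ⬝ᵥ (M *ᵥ z)) - z ⬝ᵥ z := by
    intro z
    have h := hP2 z
    have e1 : P *ᵥ (P *ᵥ z) = M *ᵥ (M *ᵥ z) - m • (M *ᵥ z) - m • (M *ᵥ z - m • z) := by
      rw [hPmv, hPmv, Matrix.mulVec_sub, Matrix.mulVec_smul]
    have e2 : z ⬝ᵥ (P *ᵥ (P *ᵥ z)) =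
        z ⬝ᵥ (M *ᵥ (M *ᵥ z)) - 2 * m * (z ⬝ᵥ (M *ᵥ z)) + m ^ 2 * (z ⬝ᵥ z) := by
      rw [e1]
      simp [dotProduct_sub, dotProduct_smul, smul_eq_mul]
      ring
    rw [e2, hPq] at h
    have h0 : m * L * (z ⬝ᵥ z) = z ⬝ᵥ z := by rw [hmL]; ring
    nlinarith [h, h0]
  -- K := (m+L) • M - M*M - 1 is PSD
  set K : Matrix n n ℝ := (m + L) • M - M * M - 1 with hKdef
  have hKt : Kᵀ = K := by
    simp [hKdef, Matrix.transpose_sub, Matrix.transpose_smul, Matrix.transpose_mul, hMt]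
  have hKq : ∀ z, z ⬝ᵥ (K *ᵥ z) =
      (m + L) * (z ⬝ᵥ (M *ᵥ z)) - z ⬝ᵥ (M *ᵥ (M *ᵥ z)) - z ⬝ᵥ z := by
    intro z
    simp [hKdef, Matrix.sub_mulVec, Matrix.smul_mulVec, dotProduct_sub,
      dotProduct_smul, smul_eq_mul, Matrix.one_mulVec, ← Matrix.mulVec_mulVec]
  have hKps : K.PosSemidef := by
    refine Matrix.PosSemidef.of_dotProduct_mulVec_nonneg ?_ ?_
    · ext i j
      have := congrFun (congrFun hKt i) j
      simpa [Matrix.conjTranspose_apply, Matrix.transpose_apply] using this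
    · intro z
      rw [show (star z : n → ℝ) = z from star_trivial z, hKq]
      have := hs2 z
      linarith
  -- V := sqrt M
  set V := CFC.sqrt M with hVdef
  have hVV : V * V = M := CFC.sqrt_mul_sqrt_self M (Matrix.nonneg_iff_posSemidef.mpr hM.posSemidef)
  have hVh : V.IsHermitian := (Matrix.nonneg_iff_posSemidef.mp (CFC.sqrt_nonneg M)).1
  have hdM : IsUnit M.det := hM.det_pos.ne'.isUnit
  have hdV : IsUnit V.det := by
    have hdet : V.det * V.det = M.det := by rw [← Matrix.det_mul, hVV]
    rw [isUnit_iff_ne_zero]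
    intro h0
    rw [h0, mul_zero] at hdet
    exact hM.det_pos.ne' hdet.symm
  have hinv1 : V⁻¹ * V = 1 := Matrix.nonsing_inv_mul V hdV
  have hinv2 : V * V⁻¹ = 1 := Matrix.mul_nonsing_inv V hdV
  have hVVinv : V⁻¹ * V⁻¹ = M⁻¹ := by
    rw [← Matrix.mul_inv_rev, hVV]
  have hVinvH : (V⁻¹)ᴴ = V⁻¹ := by rw [Matrix.conjTranspose_nonsing_inv, hVh.eq]
  have e1 : V⁻¹ * M * V⁻¹ = 1 := by
    rw [← hVV, Matrix.mul_assoc, Matrix.mul_assoc, hinv2, Matrix.mul_one, hinv1]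
  have e2 : V⁻¹ * (M * M) * V⁻¹ = M := by
    calc V⁻¹ * (M * M) * V⁻¹ = (V⁻¹ * M) * (M * V⁻¹) := by
          rw [Matrix.mul_assoc, Matrix.mul_assoc, Matrix.mul_assoc]
      _ = M := by
          rw [← hVV, ← Matrix.mul_assoc V⁻¹ V V, hinv1, Matrix.one_mul,
            Matrix.mul_assoc V V V⁻¹, hinv2, Matrix.mul_one, hVV]
  have hEq : V⁻¹ * K * V⁻¹ = (m + L) • (1 : Matrix n n ℝ) - M - M⁻¹ := by
    rw [hKdef]
    have expand : V⁻¹ * ((m + L) • M - M * M - 1) * V⁻¹ =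
        (m + L) • (V⁻¹ * M * V⁻¹) - V⁻¹ * (M * M) * V⁻¹ - V⁻¹ * V⁻¹ := by
      noncomm_ring
    rw [expand, e1, e2, hVVinv]
  have hfin := (hKps.conjTranspose_mul_mul_same V⁻¹)
  rw [hVinvH, hEq] at hfin
  have := hfin.dotProduct_mulVec_nonneg y
  rw [show (star y : n → ℝ) = y from star_trivial y] at this
  have hexp : y ⬝ᵥ (((m + L) • (1 : Matrix n n ℝ) - M - M⁻¹) *ᵥ y) =
      (m + L) * (y ⬝ᵥ y) - y ⬝ᵥ (M *ᵥ y) - y ⬝ᵥ (M⁻¹ *ᵥ y) := by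
    simp [Matrix.sub_mulVec, Matrix.smul_mulVec, dotProduct_sub,
      dotProduct_smul, smul_eq_mul, Matrix.one_mulVec]
  rw [hexp] at this
  linarith


lemma offdiag_abs_le {N : ℕ} (B : Matrix (Fin N) (Fin N) ℝ)
    (hsym : ∀ i j, B i j = B j i) {μ : ℝ}
    (hdom : ∀ i, ∑ j ∈ Finset.univ.erase i, |B i j| ≤ μ * |B i i|) (x : Fin N → ℝ) :
    |∑ i, ∑ j ∈ Finset.univ.erase i, B i j * (x i * x j)| ≤ μ * ∑ i, |B i i| * x i ^ 2 := by
  have habs : ∀ i j : Fin N, |B i j * (x i * x j)| ≤ |B i j| * ((x i ^ 2 + x j ^ 2) / 2) := by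
    intro i j
    rw [abs_mul, abs_mul]
    have h1 : |x i| * |x j| ≤ (x i ^ 2 + x j ^ 2) / 2 := by
      nlinarith [sq_nonneg (|x i| - |x j|), sq_abs (x i), sq_abs (x j)]
    exact mul_le_mul_of_nonneg_left h1 (abs_nonneg _)
  have step1 : |∑ i, ∑ j ∈ Finset.univ.erase i, B i j * (x i * x j)| ≤
      ∑ i, ∑ j ∈ Finset.univ.erase i, |B i j| * ((x i ^ 2 + x j ^ 2) / 2) := by
    calc |∑ i, ∑ j ∈ Finset.univ.erase i, B i j * (x i * x j)|
        ≤ ∑ i, |∑ j ∈ Finset.univ.erase i, B i j * (x i * x j)| :=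
          Finset.abs_sum_le_sum_abs _ _
      _ ≤ ∑ i, ∑ j ∈ Finset.univ.erase i, |B i j * (x i * x j)| := by
          apply Finset.sum_le_sum
          intro i _
          exact Finset.abs_sum_le_sum_abs _ _
      _ ≤ ∑ i, ∑ j ∈ Finset.univ.erase i, |B i j| * ((x i ^ 2 + x j ^ 2) / 2) := by
          apply Finset.sum_le_sum
          intro i _
          exact Finset.sum_le_sum fun j _ => habs i j
  have swap : (∑ i, ∑ j ∈ Finset.univ.erase i, |B i j| * x j ^ 2) =
      ∑ i, ∑ j ∈ Finset.univ.erase i, |B i j| * x i ^ 2 := by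
    have e1 : ∀ i : Fin N, (∑ j ∈ Finset.univ.erase i, |B i j| * x j ^ 2) =
        (∑ j, |B i j| * x j ^ 2) - |B i i| * x i ^ 2 :=
      fun i => Finset.sum_erase_eq_sub (Finset.mem_univ i)
    have e2 : ∀ i : Fin N, (∑ j ∈ Finset.univ.erase i, |B i j| * x i ^ 2) =
        (∑ j, |B i j| * x i ^ 2) - |B i i| * x i ^ 2 :=
      fun i => Finset.sum_erase_eq_sub (Finset.mem_univ i)
    simp only [e1, e2, Finset.sum_sub_distrib]
    congr 1
    rw [Finset.sum_comm]
    apply Finset.sum_congr rfl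
    intro j _
    apply Finset.sum_congr rfl
    intro i _
    rw [hsym i j]
  have step2 : (∑ i, ∑ j ∈ Finset.univ.erase i, |B i j| * ((x i ^ 2 + x j ^ 2) / 2)) =
      ∑ i, ∑ j ∈ Finset.univ.erase i, |B i j| * x i ^ 2 := by
    have expand : ∀ (i j : Fin N), |B i j| * ((x i ^ 2 + x j ^ 2) / 2) =
        (|B i j| * x i ^ 2) / 2 + (|B i j| * x j ^ 2) / 2 := by intro i j; ring
    simp only [expand, Finset.sum_add_distrib, ← Finset.sum_div]
    rw [swap]
    ring
  have step3 : (∑ i, ∑ j ∈ Finset.univ.erase i, |B i j| * x i ^ 2) ≤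
      μ * ∑ i, |B i i| * x i ^ 2 := by
    rw [Finset.mul_sum]
    apply Finset.sum_le_sum
    intro i _
    rw [← Finset.sum_mul]
    have := hdom i
    have hx2 : (0 : ℝ) ≤ x i ^ 2 := sq_nonneg _
    calc (∑ j ∈ Finset.univ.erase i, |B i j|) * x i ^ 2
        ≤ (μ * |B i i|) * x i ^ 2 := mul_le_mul_of_nonneg_right this hx2
      _ = μ * (|B i i| * x i ^ 2) := by ring
  linarith [step1, step2 ▸ step1, step3]


lemma herm_of_transpose {n : Type*} [Fintype n] {X : Matrix n n ℝ} (h : Xᵀ = X) :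
    X.IsHermitian := by
  ext i j
  have := congrFun (congrFun h i) j
  simpa [Matrix.conjTranspose_apply, Matrix.transpose_apply] using this

lemma transpose_of_herm {n : Type*} [Fintype n] {X : Matrix n n ℝ} (h : X.IsHermitian) :
    Xᵀ = X := by
  ext i j
  have := congrFun (congrFun h.eq i) j
  simpa [Matrix.conjTranspose_apply, Matrix.transpose_apply] using this

/-- Worst-case Price of Anarchy bound: for a symmetric, diagonally dominant
demand matrix `B` with negative diagonal, nonzero intercept `a`, centralized
optimum `p* = -(1/2)B⁻¹a` and Nash equilibrium `p^{NE} = -(A^{NE})⁻¹a`,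
the revenue ratio satisfies `R(p^{NE})/R(p*) ≥ 4(1-μ)/(2-μ)²`. -/
theorem stmt14 {N : ℕ} (B : Matrix (Fin N) (Fin N) ℝ) (hB : B.IsHermitian)
    (hdiag : ∀ i, B i i < 0)
    (μ : ℝ) (hμ0 : 0 ≤ μ) (hμ1 : μ < 1)
    (hdom : ∀ i, ∑ j ∈ Finset.univ.erase i, |B i j| ≤ μ * |B i i|)
    (a : Fin N → ℝ) (ha : a ≠ 0)
    (A : Matrix (Fin N) (Fin N) ℝ)
    (hA : A = B + Matrix.diagonal fun i => B i i)
    (R : (Fin N → ℝ) → ℝ) (hR : ∀ p, R p = a ⬝ᵥ p + p ⬝ᵥ (B *ᵥ p))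
    (pstar pNE : Fin N → ℝ)
    (hpstar : pstar = -((1 / 2 : ℝ) • (B⁻¹ *ᵥ a)))
    (hpNE : pNE = -(A⁻¹ *ᵥ a)) :
    R pNE / R pstar ≥ 4 * (1 - μ) / (2 - μ) ^ 2 := by
  classical
  have h1μ : (0 : ℝ) < 1 - μ := by linarith
  have hBt : Bᵀ = B := transpose_of_herm hB
  have hBsym : ∀ i j, B i j = B j i := by
    intro i j
    have := congrFun (congrFun hBt j) i
    simpa [Matrix.transpose_apply] using this
  set d : Fin N → ℝ := fun i => -B i i with hd_def
  have hd : ∀ i, 0 < d i := fun i => by simp only [hd_def]; linarith [hdiag i]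
  set C : Matrix (Fin N) (Fin N) ℝ := -B with hC_def
  set D : Matrix (Fin N) (Fin N) ℝ := Matrix.diagonal d with hD_def
  have hCt : Cᵀ = C := by rw [hC_def, Matrix.transpose_neg, hBt]
  have hDt : Dᵀ = D := by rw [hD_def, Matrix.diagonal_transpose]
  have hDq : ∀ x : Fin N → ℝ, x ⬝ᵥ (D *ᵥ x) = ∑ i, d i * x i ^ 2 := by
    intro x
    simp only [hD_def, dotProduct, Matrix.mulVec_diagonal]
    exact Finset.sum_congr rfl fun i _ => by ring
  have hBq : ∀ x : Fin N → ℝ, x ⬝ᵥ (B *ᵥ x) =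
      (∑ i, B i i * x i ^ 2) + ∑ i, ∑ j ∈ Finset.univ.erase i, B i j * (x i * x j) := by
    intro x
    have hrow : ∀ i, x i * (B *ᵥ x) i =
        B i i * x i ^ 2 + ∑ j ∈ Finset.univ.erase i, B i j * (x i * x j) := by
      intro i
      have hmv : (B *ᵥ x) i = ∑ j, B i j * x j := by
        simp [Matrix.mulVec, dotProduct]
      rw [hmv, Finset.mul_sum, ← Finset.add_sum_erase _ _ (Finset.mem_univ i)]
      congr 1
      · ring
      · exact Finset.sum_congr rfl fun j _ => by ring
    calc x ⬝ᵥ (B *ᵥ x) = ∑ i, x i * (B *ᵥ x) i := rfl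
      _ = ∑ i, (B i i * x i ^ 2 + ∑ j ∈ Finset.univ.erase i, B i j * (x i * x j)) :=
          Finset.sum_congr rfl fun i _ => hrow i
      _ = _ := Finset.sum_add_distrib
  have habsd : ∀ x : Fin N → ℝ,
      |∑ i, ∑ j ∈ Finset.univ.erase i, B i j * (x i * x j)| ≤ μ * ∑ i, d i * x i ^ 2 := by
    intro x
    have h := offdiag_abs_le B hBsym hdom x
    have he : ∀ i : Fin N, |B i i| = d i := fun i => abs_of_neg (hdiag i)
    calc |∑ i, ∑ j ∈ Finset.univ.erase i, B i j * (x i * x j)|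
        ≤ μ * ∑ i, |B i i| * x i ^ 2 := h
      _ = μ * ∑ i, d i * x i ^ 2 := by
          congr 1; exact Finset.sum_congr rfl fun i _ => by rw [he i]
  have hCq : ∀ x : Fin N → ℝ, x ⬝ᵥ (C *ᵥ x) =
      (∑ i, d i * x i ^ 2) - ∑ i, ∑ j ∈ Finset.univ.erase i, B i j * (x i * x j) := by
    intro x
    rw [hC_def, Matrix.neg_mulVec, dotProduct_neg, hBq]
    have : (∑ i, B i i * x i ^ 2) = -∑ i, d i * x i ^ 2 := by
      rw [← Finset.sum_neg_distrib]
      exact Finset.sum_congr rfl fun i _ => by simp [hd_def]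
    rw [this]; ring
  have hq1 : ∀ x : Fin N → ℝ, (1 - μ) * (x ⬝ᵥ (D *ᵥ x)) ≤ x ⬝ᵥ (C *ᵥ x) := by
    intro x
    rw [hCq, hDq]
    have := (abs_le.mp (habsd x)).2
    linarith
  have hq2 : ∀ x : Fin N → ℝ, x ⬝ᵥ (C *ᵥ x) ≤ (1 + μ) * (x ⬝ᵥ (D *ᵥ x)) := by
    intro x
    rw [hCq, hDq]
    have := (abs_le.mp (habsd x)).1
    linarith
  have hDpd : D.PosDef := Matrix.PosDef.diagonal hd
  have hDq_pos : ∀ x : Fin N → ℝ, x ≠ 0 → 0 < x ⬝ᵥ (D *ᵥ x) := by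
    intro x hx
    have := hDpd.dotProduct_mulVec_pos hx
    simpa using this
  have hDq_nonneg : ∀ x : Fin N → ℝ, 0 ≤ x ⬝ᵥ (D *ᵥ x) := by
    intro x
    by_cases hx : x = 0
    · simp [hx]
    · exact (hDq_pos x hx).le
  have hCpd : C.PosDef := by
    refine Matrix.PosDef.of_dotProduct_mulVec_pos (herm_of_transpose hCt) fun x hx => ?_
    rw [show (star x : Fin N → ℝ) = x from star_trivial x]
    calc (0:ℝ) < (1 - μ) * (x ⬝ᵥ (D *ᵥ x)) := mul_pos h1μ (hDq_pos x hx)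
      _ ≤ x ⬝ᵥ (C *ᵥ x) := hq1 x
  have hCdet : IsUnit C.det := hCpd.det_pos.ne'.isUnit
  have hCC1 : C * C⁻¹ = 1 := Matrix.mul_nonsing_inv C hCdet
  have hC1C : C⁻¹ * C = 1 := Matrix.nonsing_inv_mul C hCdet
  -- A facts
  have hnegA : -A = C + D := by
    rw [hA, hC_def, hD_def]
    have hdneg : Matrix.diagonal d = -Matrix.diagonal fun i => B i i := by
      rw [← Matrix.diagonal_neg]
    rw [hdneg]
    abel
  have hApd : (-A).PosDef := by rw [hnegA]; exact hCpd.add hDpd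
  have hAdet : IsUnit A.det := by
    have h1 : (-A).det ≠ 0 := hApd.det_pos.ne'
    rw [Matrix.det_neg] at h1
    rw [isUnit_iff_ne_zero]
    intro h0
    exact h1 (by rw [h0, mul_zero])
  set x₀ : Fin N → ℝ := A⁻¹ *ᵥ a with hx₀def
  have hax : A *ᵥ x₀ = a := by
    rw [hx₀def, Matrix.mulVec_mulVec, Matrix.mul_nonsing_inv A hAdet, Matrix.one_mulVec]
  have hx₀ne : x₀ ≠ 0 := by
    intro h
    apply ha
    rw [← hax, h, Matrix.mulVec_zero]
  have hCDx : (C + D) *ᵥ x₀ = -a := by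
    rw [← hnegA, Matrix.neg_mulVec, hax]
  -- R pNE
  have hRNE : R pNE = x₀ ⬝ᵥ (D *ᵥ x₀) := by
    rw [hR, hpNE]
    have hABD : A = B - D := by
      have h := hnegA
      rw [hC_def] at h
      have : A = -(-B + D) := by rw [← h]; abel
      rw [this]; abel
    have h1 : a ⬝ᵥ (-(A⁻¹ *ᵥ a)) = -(x₀ ⬝ᵥ (A *ᵥ x₀)) := by
      rw [← hx₀def, dotProduct_neg, ← hax, dotProduct_comm]
    have h2 : (-(A⁻¹ *ᵥ a)) ⬝ᵥ (B *ᵥ (-(A⁻¹ *ᵥ a))) = x₀ ⬝ᵥ (B *ᵥ x₀) := by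
      rw [← hx₀def, Matrix.mulVec_neg, dotProduct_neg, neg_dotProduct, neg_neg]
    have h3 : x₀ ⬝ᵥ (A *ᵥ x₀) = x₀ ⬝ᵥ (B *ᵥ x₀) - x₀ ⬝ᵥ (D *ᵥ x₀) := by
      rw [hABD, Matrix.sub_mulVec, dotProduct_sub]
    rw [h1, h2, h3]
    ring
  -- R pstar
  have hBinv : B⁻¹ = -C⁻¹ := by
    apply Matrix.inv_eq_right_inv
    have hBC : B = -C := by rw [hC_def, neg_neg]
    rw [hBC, neg_mul_neg, hCC1]
  set Q : ℝ := a ⬝ᵥ (C⁻¹ *ᵥ a) with hQdef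
  have hQpos : 0 < Q := by
    have := hCpd.inv.dotProduct_mulVec_pos ha
    rw [show (star a : Fin N → ℝ) = a from star_trivial a] at this
    exact this
  have hRstar : R pstar = Q / 4 := by
    rw [hR, hpstar, hBinv]
    have hps : -((1/2 : ℝ) • ((-C⁻¹) *ᵥ a)) = (1/2 : ℝ) • (C⁻¹ *ᵥ a) := by
      rw [Matrix.neg_mulVec, smul_neg, neg_neg]
    rw [hps]
    set u : Fin N → ℝ := C⁻¹ *ᵥ a with hu_def
    have hBu : B *ᵥ u = -a := by
      rw [hu_def, Matrix.mulVec_mulVec,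
        show B * C⁻¹ = -(C * C⁻¹) by rw [hC_def, Matrix.neg_mul, neg_neg],
        hCC1, Matrix.neg_mulVec, Matrix.one_mulVec]
    have hdot1 : a ⬝ᵥ ((1/2 : ℝ) • u) = Q / 2 := by
      rw [dotProduct_smul, ← hQdef, smul_eq_mul]
      ring
    have hdot2 : ((1/2 : ℝ) • u) ⬝ᵥ (B *ᵥ ((1/2 : ℝ) • u)) = -(Q/4) := by
      rw [Matrix.mulVec_smul, hBu, smul_dotProduct, dotProduct_smul,
        dotProduct_neg, dotProduct_comm, ← hQdef, smul_eq_mul, smul_eq_mul]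
      ring
    rw [hdot1, hdot2]
    ring
  -- weighted conjugation setup
  set f : Fin N → ℝ := fun i => Real.sqrt (d i) with hfdef
  have hf : ∀ i, 0 < f i := fun i => Real.sqrt_pos.mpr (hd i)
  set g : Fin N → ℝ := fun i => (f i)⁻¹ with hgdef
  have hfg : ∀ i, f i * g i = 1 := fun i => mul_inv_cancel₀ (hf i).ne'
  have hff : ∀ i, f i * f i = d i := fun i => Real.mul_self_sqrt (hd i).le
  set E : Matrix (Fin N) (Fin N) ℝ := Matrix.diagonal f with hEdef
  set F : Matrix (Fin N) (Fin N) ℝ := Matrix.diagonal g with hFdef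
  have hEF : E * F = 1 := by
    rw [hEdef, hFdef, Matrix.diagonal_mul_diagonal,
      show (fun i => f i * g i) = fun _ : Fin N => (1:ℝ) from funext hfg, Matrix.diagonal_one]
  have hFE : F * E = 1 := by
    rw [hFdef, hEdef, Matrix.diagonal_mul_diagonal,
      show (fun i => g i * f i) = fun _ : Fin N => (1:ℝ) from
        funext (fun i => by rw [mul_comm]; exact hfg i), Matrix.diagonal_one]
  have hEE : E * E = D := by
    rw [hEdef, Matrix.diagonal_mul_diagonal, hD_def,
      show (fun i => f i * f i) = d from funext hff]
  have hEt : Eᵀ = E := by rw [hEdef, Matrix.diagonal_transpose]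
  have hFt : Fᵀ = F := by rw [hFdef, Matrix.diagonal_transpose]
  set M : Matrix (Fin N) (Fin N) ℝ := F * C * F with hMdef
  have hMt : Mᵀ = M := by
    rw [hMdef, Matrix.transpose_mul, Matrix.transpose_mul, hFt, hCt, Matrix.mul_assoc]
  have hMmv : ∀ y : Fin N → ℝ, y ⬝ᵥ (M *ᵥ y) = (F *ᵥ y) ⬝ᵥ (C *ᵥ (F *ᵥ y)) := by
    intro y
    rw [hMdef, ← Matrix.mulVec_mulVec, ← Matrix.mulVec_mulVec, ← dot_sym_mulVec hFt]
  have hFDF : ∀ y : Fin N → ℝ, (F *ᵥ y) ⬝ᵥ (D *ᵥ (F *ᵥ y)) = y ⬝ᵥ y := by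
    intro y
    rw [hDq]
    have hterm : ∀ i : Fin N, d i * ((F *ᵥ y) i) ^ 2 = y i * y i := by
      intro i
      have hFyi : (F *ᵥ y) i = g i * y i := by rw [hFdef, Matrix.mulVec_diagonal]
      rw [hFyi]
      calc d i * (g i * y i) ^ 2 = (f i * f i) * (g i * y i) ^ 2 := by rw [hff]
        _ = (f i * g i) * (f i * g i) * (y i * y i) := by ring
        _ = y i * y i := by rw [hfg]; ring
    calc (∑ i, d i * ((F *ᵥ y) i) ^ 2) = ∑ i, y i * y i :=
          Finset.sum_congr rfl fun i _ => hterm i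
      _ = y ⬝ᵥ y := rfl
  have hMlow : ∀ y : Fin N → ℝ, (1 - μ) * (y ⬝ᵥ y) ≤ y ⬝ᵥ (M *ᵥ y) := by
    intro y
    rw [hMmv, ← hFDF y]
    exact hq1 (F *ᵥ y)
  have hMupp : ∀ y : Fin N → ℝ, y ⬝ᵥ (M *ᵥ y) ≤ (1 - μ)⁻¹ * (y ⬝ᵥ y) := by
    intro y
    have h1 : y ⬝ᵥ (M *ᵥ y) ≤ (1 + μ) * (y ⬝ᵥ y) := by
      rw [hMmv, ← hFDF y]
      exact hq2 (F *ᵥ y)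
    have h2 : (1 + μ) ≤ (1 - μ)⁻¹ := by
      rw [inv_eq_one_div, le_div_iff₀ h1μ]
      nlinarith
    have h3 : 0 ≤ y ⬝ᵥ y := dot_self_nonneg y
    calc y ⬝ᵥ (M *ᵥ y) ≤ (1 + μ) * (y ⬝ᵥ y) := h1
      _ ≤ (1 - μ)⁻¹ * (y ⬝ᵥ y) := mul_le_mul_of_nonneg_right h2 h3
  have hMpd : M.PosDef := by
    refine Matrix.PosDef.of_dotProduct_mulVec_pos (herm_of_transpose hMt) fun y hy => ?_
    rw [show (star y : Fin N → ℝ) = y from star_trivial y]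
    calc (0:ℝ) < (1 - μ) * (y ⬝ᵥ y) := mul_pos h1μ (dot_self_pos hy)
      _ ≤ y ⬝ᵥ (M *ᵥ y) := hMlow y
  have hmL : (1 - μ) * (1 - μ)⁻¹ = 1 := mul_inv_cancel₀ h1μ.ne'
  have hkey := key_ineq hMpd hmL hMlow hMupp (E *ᵥ x₀)
  have hMinv : M⁻¹ = E * C⁻¹ * E := by
    apply Matrix.inv_eq_right_inv
    have hstep : (F * C * F) * (E * C⁻¹ * E) = F * C * (F * E) * C⁻¹ * E := by
      noncomm_ring
    rw [hMdef, hstep, hFE, Matrix.mul_one, Matrix.mul_assoc F C C⁻¹, hCC1,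
      Matrix.mul_one, hFE]
  have hyy : (E *ᵥ x₀) ⬝ᵥ (E *ᵥ x₀) = x₀ ⬝ᵥ (D *ᵥ x₀) := by
    rw [dot_sym_mulVec hEt, Matrix.mulVec_mulVec, hEE]
  have hyMy : (E *ᵥ x₀) ⬝ᵥ (M *ᵥ (E *ᵥ x₀)) = x₀ ⬝ᵥ (C *ᵥ x₀) := by
    rw [hMmv, Matrix.mulVec_mulVec, hFE, Matrix.one_mulVec]
  have hyMinvy : (E *ᵥ x₀) ⬝ᵥ (M⁻¹ *ᵥ (E *ᵥ x₀)) = x₀ ⬝ᵥ ((D * C⁻¹ * D) *ᵥ x₀) := by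
    rw [hMinv, dot_sym_mulVec hEt, Matrix.mulVec_mulVec, Matrix.mulVec_mulVec]
    have hmat : (E * (E * C⁻¹ * E)) * E = D * C⁻¹ * D := by
      rw [← hEE]
      noncomm_ring
    rw [hmat]
  -- Q expansion
  have hQx : Q = x₀ ⬝ᵥ (C *ᵥ x₀) + 2 * (x₀ ⬝ᵥ (D *ᵥ x₀)) + x₀ ⬝ᵥ ((D * C⁻¹ * D) *ᵥ x₀) := by
    have h1 : Q = ((C + D) *ᵥ x₀) ⬝ᵥ (C⁻¹ *ᵥ ((C + D) *ᵥ x₀)) := by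
      rw [hQdef, hCDx, Matrix.mulVec_neg, dotProduct_neg, neg_dotProduct,
        neg_neg]
    have hCDt : (C + D)ᵀ = C + D := by rw [Matrix.transpose_add, hCt, hDt]
    have hmat : (C + D) * C⁻¹ * (C + D) = C + (2:ℝ) • D + D * C⁻¹ * D := by
      have e : (C + D) * C⁻¹ * (C + D) =
          C * (C⁻¹ * C) + (C * C⁻¹) * D + D * (C⁻¹ * C) + D * C⁻¹ * D := by
        noncomm_ring
      rw [e, hC1C, hCC1, Matrix.mul_one, Matrix.one_mul, Matrix.mul_one, two_smul]
      abel
    rw [h1, dot_sym_mulVec hCDt, Matrix.mulVec_mulVec, Matrix.mulVec_mulVec, hmat]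
    rw [Matrix.add_mulVec, Matrix.add_mulVec, Matrix.smul_mulVec,
      dotProduct_add, dotProduct_add, dotProduct_smul, smul_eq_mul]
  have hbound : Q ≤ ((1 - μ) + (1 - μ)⁻¹ + 2) * (x₀ ⬝ᵥ (D *ᵥ x₀)) := by
    rw [hyy, hyMy, hyMinvy] at hkey
    rw [hQx]
    linarith
  -- final arithmetic
  rw [hRNE, hRstar]
  have hTpos : 0 < x₀ ⬝ᵥ (D *ᵥ x₀) := hDq_pos x₀ hx₀ne
  set T : ℝ := x₀ ⬝ᵥ (D *ᵥ x₀) with hTdef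
  have h2μ : (0:ℝ) < 2 - μ := by linarith
  rw [ge_iff_le, div_le_div_iff₀ (by positivity) (by positivity)]
  have hscale : (1 - μ) * Q ≤ (1 - μ) * (((1 - μ) + (1 - μ)⁻¹ + 2) * T) :=
    mul_le_mul_of_nonneg_left hbound h1μ.le
  have hLT : (1 - μ) * ((1 - μ)⁻¹ * T) = T := by
    rw [← mul_assoc, hmL, one_mul]
  nlinarith [hscale, hLT, hTpos, hQpos]
end

section
/- In the fully symmetric exchangeable model B = -(1+ρ)I + ρ𝟙𝟙ᵀ with μ := (N-1)ρ < 1 and intercept a·𝟙 (a ≠ 0), the centralized optimum is p* = (a/(2(1-μ)))𝟙 with revenue R(p*) = Na²/(4(1-μ)), the Nash equilibrium is p^{NE} = (a/(2-μ))𝟙 with revenue R(p^{NE}) = Na²/(2-μ)², and hence the ratio R(p^{NE})/R(p*) = 4(1-μ)/(2-μ)², showing the worst-case PoA bound is tight. -/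
open Matrix

lemma sum_ite_const' {N : ℕ} (j : Fin N) (x y : ℝ) :
    ∑ k : Fin N, (if k = j then x else y) = (N : ℝ) * y + (x - y) := by
  have h : ∀ k : Fin N, (if k = j then x else y) = y + (if k = j then x - y else 0) := by
    intro k; split <;> ring
  simp only [h, Finset.sum_add_distrib, Finset.sum_const, Finset.card_univ,
    Fintype.card_fin, nsmul_eq_mul, Finset.sum_ite_eq', Finset.mem_univ, if_true]

lemma rankone_inv_mulVec {N : ℕ} (d ρ a : ℝ) (M : Matrix (Fin N) (Fin N) ℝ)
    (hM : M = Matrix.of fun i j => if i = j then d else ρ)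
    (hc0 : d - ρ ≠ 0) (hm0 : d + ((N : ℝ) - 1) * ρ ≠ 0) :
    M⁻¹ *ᵥ (fun _ => a) = fun _ => a / (d + ((N : ℝ) - 1) * ρ) := by
  have hβα : True := trivial
  set m : ℝ := d + ((N : ℝ) - 1) * ρ with hm
  set β : ℝ := -ρ / ((d - ρ) * m) with hβ
  set α : ℝ := 1 / (d - ρ) + β with hα
  set C : Matrix (Fin N) (Fin N) ℝ := Matrix.of (fun i j => if i = j then α else β) with hCdef
  have hMC : M * C = 1 := by
    ext i j
    have hrow : ∀ k : Fin N, M i k * C k j =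
        ρ * C k j + (if k = i then (d - ρ) * C k j else 0) := by
      intro k
      simp only [hM, Matrix.of_apply]
      by_cases h : i = k
      · rw [if_pos h, if_pos h.symm]; ring
      · rw [if_neg h, if_neg (fun hk => h hk.symm)]; ring
    rw [Matrix.mul_apply]
    simp only [hrow, Finset.sum_add_distrib, Finset.sum_ite_eq', Finset.mem_univ, if_true,
      ← Finset.mul_sum]
    have hcol : ∑ k : Fin N, C k j = (N : ℝ) * β + (α - β) := by
      simp only [hCdef, Matrix.of_apply]; exact sum_ite_const' j α β
    rw [hcol]
    by_cases h : i = j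
    · subst h
      simp only [hCdef, Matrix.of_apply, if_pos rfl, if_true, Matrix.one_apply_eq]
      rw [hα, hβ, hm]
      have hm0' : d + ((N : ℝ) - 1) * ρ ≠ 0 := hm0
      have hm1 : -ρ + ρ * (N : ℝ) + d ≠ 0 := by intro h; apply hm0'; linarith
      have hm2 : (N : ℝ) * ρ - ρ + d ≠ 0 := by intro h; apply hm0'; linarith
      have hm3 : d + ρ * ((N : ℝ) - 1) ≠ 0 := by intro h; apply hm0'; linarith
      field_simp
      ring
    · simp only [hCdef, Matrix.of_apply, if_neg h, Matrix.one_apply_ne h]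
      rw [hα, hβ, hm]
      have hm0' : d + ((N : ℝ) - 1) * ρ ≠ 0 := hm0
      have hm1 : -ρ + ρ * (N : ℝ) + d ≠ 0 := by intro h; apply hm0'; linarith
      have hm2 : (N : ℝ) * ρ - ρ + d ≠ 0 := by intro h; apply hm0'; linarith
      have hm3 : d + ρ * ((N : ℝ) - 1) ≠ 0 := by intro h; apply hm0'; linarith
      field_simp
      ring
  have hinv : M⁻¹ = C := Matrix.inv_eq_right_inv hMC
  rw [hinv]
  funext i
  simp only [Matrix.mulVec, dotProduct, hCdef, Matrix.of_apply]
  have h2 : ∀ k : Fin N, (if i = k then α else β) * a = (if k = i then α * a else β * a) := by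
    intro k; by_cases h : i = k
    · rw [if_pos h, if_pos h.symm]
    · rw [if_neg h, if_neg (fun hk => h hk.symm)]
  rw [Finset.sum_congr rfl (fun k _ => h2 k), sum_ite_const' i (α * a) (β * a)]
  rw [hα, hβ, hm]
  have hm0' : d + ((N : ℝ) - 1) * ρ ≠ 0 := hm0
  have hm1 : -ρ + ρ * (N : ℝ) + d ≠ 0 := by intro h; apply hm0'; linarith
  have hm2 : (N : ℝ) * ρ - ρ + d ≠ 0 := by intro h; apply hm0'; linarith
  have hm3 : d + ρ * ((N : ℝ) - 1) ≠ 0 := by intro h; apply hm0'; linarith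
  field_simp
  ring

lemma rankone_mulVec_const {N : ℕ} (d ρ t : ℝ) (M : Matrix (Fin N) (Fin N) ℝ)
    (hM : M = Matrix.of fun i j => if i = j then d else ρ) :
    M *ᵥ (fun _ => t) = fun _ => (d + ((N : ℝ) - 1) * ρ) * t := by
  funext i
  simp only [hM, Matrix.mulVec, dotProduct, Matrix.of_apply]
  have h2 : ∀ k : Fin N, (if i = k then d else ρ) * t = (if k = i then d * t else ρ * t) := by
    intro k; by_cases h : i = k
    · rw [if_pos h, if_pos h.symm]
    · rw [if_neg h, if_neg (fun hk => h hk.symm)]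
  rw [Finset.sum_congr rfl (fun k _ => h2 k), sum_ite_const' i (d * t) (ρ * t)]
  ring

lemma dot_const' {N : ℕ} (x y : ℝ) :
    (fun _ : Fin N => x) ⬝ᵥ (fun _ => y) = (N : ℝ) * (x * y) := by
  simp [dotProduct, Finset.sum_const, Finset.card_univ, nsmul_eq_mul]


/-- In the fully symmetric exchangeable model with `μ = (N-1)ρ < 1` and
intercept `a𝟙` (`a ≠ 0`): the centralized optimum is `p* = (a/(2(1-μ)))𝟙` with
revenue `Na²/(4(1-μ))`, the Nash equilibrium is `p^{NE} = (a/(2-μ))𝟙` with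
revenue `Na²/(2-μ)²`, and the ratio equals `4(1-μ)/(2-μ)²` (tightness of the
PoA bound). -/
theorem stmt16 {N : ℕ} (hN : 2 ≤ N) (ρ : ℝ) (hρ : 0 ≤ ρ)
    (μ : ℝ) (hμ : μ = ((N : ℝ) - 1) * ρ) (hμ1 : μ < 1)
    (a : ℝ) (ha : a ≠ 0)
    (B A : Matrix (Fin N) (Fin N) ℝ)
    (hB : B = Matrix.of fun i j => if i = j then (-1 : ℝ) else ρ)
    (hA : A = Matrix.of fun i j => if i = j then (-2 : ℝ) else ρ)
    (R : (Fin N → ℝ) → ℝ)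
    (hR : ∀ p, R p = (fun _ => a) ⬝ᵥ p + p ⬝ᵥ (B *ᵥ p))
    (pstar pNE : Fin N → ℝ)
    (hpstar : pstar = -((1 / 2 : ℝ) • (B⁻¹ *ᵥ fun _ => a)))
    (hpNE : pNE = -(A⁻¹ *ᵥ fun _ => a)) :
    (pstar = fun _ => a / (2 * (1 - μ))) ∧
    R pstar = (N : ℝ) * a ^ 2 / (4 * (1 - μ)) ∧
    pNE = (fun _ => a / (2 - μ)) ∧
    R pNE = (N : ℝ) * a ^ 2 / (2 - μ) ^ 2 ∧
    R pNE / R pstar = 4 * (1 - μ) / (2 - μ) ^ 2 := by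
  have hN0 : (N : ℝ) ≠ 0 := Nat.cast_ne_zero.mpr (by omega)
  have h1μ : (1 : ℝ) - μ ≠ 0 := by linarith
  have h2μ : (2 : ℝ) - μ ≠ 0 := by linarith
  have hcB : (-1 : ℝ) - ρ ≠ 0 := by linarith
  have hcA : (-2 : ℝ) - ρ ≠ 0 := by linarith
  have hmB : (-1 : ℝ) + ((N : ℝ) - 1) * ρ ≠ 0 := by rw [← hμ]; intro h; apply h1μ; linarith
  have hmA : (-2 : ℝ) + ((N : ℝ) - 1) * ρ ≠ 0 := by rw [← hμ]; intro h; apply h2μ; linarith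
  have hBinv := rankone_inv_mulVec (-1) ρ a B hB hcB hmB
  have hAinv := rankone_inv_mulVec (-2) ρ a A hA hcA hmA
  have hmB' : (-1 : ℝ) + μ ≠ 0 := by intro h; apply h1μ; linarith
  have hmA' : (-2 : ℝ) + μ ≠ 0 := by intro h; apply h2μ; linarith
  have hps : pstar = fun _ => a / (2 * (1 - μ)) := by
    rw [hpstar, hBinv]
    funext i
    simp only [Pi.neg_apply, Pi.smul_apply, smul_eq_mul, ← hμ]
    field_simp
    ring
  have hpn : pNE = fun _ => a / (2 - μ) := by
    rw [hpNE, hAinv]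
    funext i
    simp only [Pi.neg_apply, ← hμ]
    field_simp
    ring
  have hRps : R pstar = (N : ℝ) * a ^ 2 / (4 * (1 - μ)) := by
    rw [hR, hps, rankone_mulVec_const (-1) ρ (a / (2 * (1 - μ))) B hB,
      dot_const', dot_const']
    simp only [← hμ]
    field_simp
    ring
  have hRpn : R pNE = (N : ℝ) * a ^ 2 / (2 - μ) ^ 2 := by
    rw [hR, hpn, rankone_mulVec_const (-1) ρ (a / (2 - μ)) B hB,
      dot_const', dot_const']
    simp only [← hμ]
    field_simp
    ring
  refine ⟨hps, hRps, hpn, hRpn, ?_⟩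
  rw [hRps, hRpn]
  have ha2 : a ^ 2 ≠ 0 := pow_ne_zero 2 ha
  field_simp
end
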